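/- arXiv:1807.07773 — 3 statements merged into one kernel-verified Lean document; each statement's English description precedes it below -/
import Mathlib

section
/- Let f: ℝ → ℝ be an L-Lipschitz function. Then the map X ↦ Tr f(X), defined on N×N Hermitian matrices via functional calculus, is √N·L-Lipschitz with respect to the Hilbert–Schmidt norm ‖M‖₂ = (Tr M M*)^{1/2}. -/
open Matrix
set_option maxHeartbeats 1000000

open Matrix


private lemma trace_conj_aux (N : ℕ) (U V D : Matrix (Fin N) (Fin N) ℂ)
    (hU1 : U * star U = 1) (hV1 : V * star V = 1) :
    ((star U * D * V) * (star U * D * V)ᴴ).trace = (D * Dᴴ).trace := by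
  have h : (star U * D * V) * (star U * D * V)ᴴ = star U * (D * Dᴴ) * U := by
    simp only [conjTranspose_mul, star_eq_conjTranspose, conjTranspose_conjTranspose,
      Matrix.mul_assoc]
    rw [← Matrix.mul_assoc V Vᴴ, show V * Vᴴ = 1 from hV1, Matrix.one_mul]
  rw [h, Matrix.trace_mul_cycle, ← Matrix.mul_assoc, star_eq_conjTranspose,
    show U * Uᴴ = 1 from hU1, Matrix.one_mul]

/-- Let `f : ℝ → ℝ` be `L`-Lipschitz. Then `X ↦ Tr f(X)` on `N × N` Hermitian matrices,
where `Tr f(X) = Σᵢ f(λᵢ(X))`, is `√N · L`-Lipschitz with respect to the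
Hilbert–Schmidt norm `‖M‖₂ = (Tr M M*)^{1/2}`. -/
theorem trace_funcCalc_lipschitz (N : ℕ) (f : ℝ → ℝ) (L : ℝ) (hL : 0 ≤ L)
    (hf : ∀ a b : ℝ, |f a - f b| ≤ L * |a - b|)
    (X Y : Matrix (Fin N) (Fin N) ℂ) (hX : X.IsHermitian) (hY : Y.IsHermitian) :
    |(∑ i, f (hX.eigenvalues i)) - ∑ i, f (hY.eigenvalues i)| ≤
      Real.sqrt N * L * Real.sqrt (((X - Y) * (X - Y)ᴴ).trace.re) := by
  classical
  set U : Matrix (Fin N) (Fin N) ℂ := (hX.eigenvectorUnitary : Matrix (Fin N) (Fin N) ℂ)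
  set V : Matrix (Fin N) (Fin N) ℂ := (hY.eigenvectorUnitary : Matrix (Fin N) (Fin N) ℂ)
  have hU1 : U * star U = 1 := (Matrix.mem_unitaryGroup_iff).mp hX.eigenvectorUnitary.2
  have hU2 : star U * U = 1 := (Matrix.mem_unitaryGroup_iff').mp hX.eigenvectorUnitary.2
  have hV1 : V * star V = 1 := (Matrix.mem_unitaryGroup_iff).mp hY.eigenvectorUnitary.2
  have hV2 : star V * V = 1 := (Matrix.mem_unitaryGroup_iff').mp hY.eigenvectorUnitary.2
  set B : Matrix (Fin N) (Fin N) ℂ := star U * V with hBdef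
  set lam := hX.eigenvalues
  set mu := hY.eigenvalues
  set a : Fin N → Fin N → ℝ := fun i j => Complex.normSq (B i j) with hadef
  have ha0 : ∀ i j, 0 ≤ a i j := fun i j => Complex.normSq_nonneg _
  -- B is unitary: row and column sums of |B i j|^2 are 1
  have hB1 : B * Bᴴ = 1 := by
    simp only [hBdef, conjTranspose_mul, conjTranspose_conjTranspose]
    calc star U * V * (Vᴴ * (Uᴴ)ᴴ) = star U * (V * star V) * U := by
          simp [Matrix.mul_assoc, star_eq_conjTranspose]
      _ = 1 := by rw [hV1, Matrix.mul_one, hU2]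
  have hB2 : Bᴴ * B = 1 := by
    simp only [hBdef, conjTranspose_mul, conjTranspose_conjTranspose]
    calc Vᴴ * (Uᴴ)ᴴ * (star U * V) = star V * (U * star U) * V := by
          simp [Matrix.mul_assoc, star_eq_conjTranspose]
      _ = 1 := by rw [hU1, Matrix.mul_one, hV2]
  have hrow : ∀ i, ∑ j, a i j = 1 := by
    intro i
    have := congrFun (congrFun hB1 i) i
    simp only [Matrix.mul_apply, Matrix.one_apply_eq, conjTranspose_apply] at this
    have : (∑ j, (Complex.normSq (B i j) : ℂ)) = 1 := by
      rw [← this]; congr 1; ext j; rw [Complex.star_def, Complex.mul_conj]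
    have := congrArg Complex.re this
    simpa [hadef] using this
  have hcol : ∀ j, ∑ i, a i j = 1 := by
    intro j
    have := congrFun (congrFun hB2 j) j
    simp only [Matrix.mul_apply, Matrix.one_apply_eq, conjTranspose_apply] at this
    have : (∑ i, (Complex.normSq (B i j) : ℂ)) = 1 := by
      rw [← this]; congr 1; ext i; rw [Complex.star_def, mul_comm, Complex.mul_conj]
    have := congrArg Complex.re this
    simpa [hadef] using this
  -- the conjugated difference matrix
  set A : Matrix (Fin N) (Fin N) ℂ := star U * (X - Y) * V with hAdef
  have hAentry : ∀ i j, A i j = ((lam i : ℂ) - (mu j : ℂ)) * B i j := by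
    have h1 : star U * X = diagonal (RCLike.ofReal ∘ lam) * star U := by
      conv_lhs => rw [hX.spectral_theorem, Unitary.conjStarAlgAut_apply]
      rw [← Matrix.mul_assoc, ← Matrix.mul_assoc, star_eq_conjTranspose]
      rw [show Uᴴ * U = 1 from hU2, Matrix.one_mul]
    have h2 : Y * V = V * diagonal (RCLike.ofReal ∘ mu) := by
      conv_lhs => rw [hY.spectral_theorem, Unitary.conjStarAlgAut_apply]
      rw [Matrix.mul_assoc, Matrix.mul_assoc, star_eq_conjTranspose]
      rw [show Vᴴ * V = 1 from hV2, Matrix.mul_one]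
    intro i j
    have hmain : A = diagonal (RCLike.ofReal ∘ lam) * B - B * diagonal (RCLike.ofReal ∘ mu) := by
      have e : star U * (X - Y) * V = star U * X * V - star U * (Y * V) := by
        simp [Matrix.mul_sub, Matrix.sub_mul, Matrix.mul_assoc]
      rw [hAdef, e, h1, h2, Matrix.mul_assoc, ← Matrix.mul_assoc (star U) V, hBdef]
    rw [hmain]
    simp only [Matrix.sub_apply, diagonal_mul, mul_diagonal, Function.comp_apply,
      show (RCLike.ofReal : ℝ → ℂ) = Complex.ofReal from rfl]
    ring
  -- trace identity
  have htr : ((X - Y) * (X - Y)ᴴ).trace = (A * Aᴴ).trace := by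
    rw [hAdef, trace_conj_aux N U V (X - Y) hU1 hV1]
  set T : ℝ := ∑ i, ∑ j, (lam i - mu j) ^ 2 * a i j with hTdef
  have hT0 : 0 ≤ T := Finset.sum_nonneg fun i _ => Finset.sum_nonneg fun j _ =>
    mul_nonneg (sq_nonneg _) (ha0 i j)
  have htrT : ((X - Y) * (X - Y)ᴴ).trace.re = T := by
    rw [htr]
    have : (A * Aᴴ).trace = ∑ i, ∑ j, ((((lam i - mu j) ^ 2 * a i j : ℝ)) : ℂ) := by
      rw [Matrix.trace]
      simp only [Matrix.diag_apply, Matrix.mul_apply, conjTranspose_apply]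
      congr 1; ext i; congr 1; ext j
      rw [hAentry, Complex.star_def, Complex.mul_conj]
      norm_cast
      rw [Complex.normSq_mul]
      simp only [hadef]
      rw [Complex.normSq_ofReal]; ring
    rw [this]
    simp only [← Complex.ofReal_sum, Complex.ofReal_re]
    exact hTdef.symm
  rw [htrT]
  -- key identity
  have hkey : (∑ i, f (lam i)) - ∑ j, f (mu j)
      = ∑ i, ∑ j, (f (lam i) - f (mu j)) * a i j := by
    have e1 : ∑ i, ∑ j, f (lam i) * a i j = ∑ i, f (lam i) := by
      simp only [← Finset.mul_sum, hrow, mul_one]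
    have e2 : ∑ i, ∑ j, f (mu j) * a i j = ∑ j, f (mu j) := by
      rw [Finset.sum_comm]
      simp only [← Finset.mul_sum, hcol, mul_one]
    rw [← e1, ← e2, ← Finset.sum_sub_distrib]
    congr 1; ext i
    rw [← Finset.sum_sub_distrib]
    congr 1; ext j
    ring
  rw [hkey]
  calc |∑ i, ∑ j, (f (lam i) - f (mu j)) * a i j|
      ≤ ∑ i, ∑ j, |(f (lam i) - f (mu j)) * a i j| := by
        exact (Finset.abs_sum_le_sum_abs _ _).trans
          (Finset.sum_le_sum fun i _ => Finset.abs_sum_le_sum_abs _ _)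
    _ ≤ ∑ i, ∑ j, L * |lam i - mu j| * a i j := by
        refine Finset.sum_le_sum fun i _ => Finset.sum_le_sum fun j _ => ?_
        rw [abs_mul, abs_of_nonneg (ha0 i j)]
        exact mul_le_mul_of_nonneg_right (hf _ _) (ha0 i j)
    _ = L * ∑ i, ∑ j, |lam i - mu j| * a i j := by
        rw [Finset.mul_sum]; congr 1; ext i; rw [Finset.mul_sum]; congr 1; ext j; ring
    _ ≤ L * (Real.sqrt N * Real.sqrt T) := by
        refine mul_le_mul_of_nonneg_left ?_ hL
        have := Real.sum_mul_le_sqrt_mul_sqrt (Finset.univ ×ˢ Finset.univ)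
          (fun p : Fin N × Fin N => Real.sqrt (a p.1 p.2))
          (fun p : Fin N × Fin N => |lam p.1 - mu p.2| * Real.sqrt (a p.1 p.2))
        have e1 : ∑ p ∈ Finset.univ ×ˢ Finset.univ,
            Real.sqrt (a p.1 p.2) * (|lam p.1 - mu p.2| * Real.sqrt (a p.1 p.2))
            = ∑ i, ∑ j, |lam i - mu j| * a i j := by
          rw [Finset.sum_product]
          congr 1; ext i; congr 1; ext j
          rw [show Real.sqrt (a i j) * (|lam i - mu j| * Real.sqrt (a i j))
              = |lam i - mu j| * (Real.sqrt (a i j) * Real.sqrt (a i j)) by ring,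
            Real.mul_self_sqrt (ha0 i j)]
        have e2 : ∑ p ∈ Finset.univ ×ˢ Finset.univ, Real.sqrt (a p.1 p.2) ^ 2 = (N : ℝ) := by
          rw [Finset.sum_product]
          have : ∀ i : Fin N, ∑ j, Real.sqrt (a i j) ^ 2 = 1 := by
            intro i
            rw [← hrow i]
            congr 1; ext j; exact Real.sq_sqrt (ha0 i j)
          simp [this]
        have e3 : ∑ p ∈ Finset.univ ×ˢ Finset.univ,
            (|lam p.1 - mu p.2| * Real.sqrt (a p.1 p.2)) ^ 2 = T := by
          rw [Finset.sum_product, hTdef]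
          congr 1; ext i; congr 1; ext j
          rw [mul_pow, Real.sq_sqrt (ha0 i j), sq_abs]
        rw [e1, e2, e3] at this
        exact this
    _ = Real.sqrt N * L * Real.sqrt T := by ring
end

section
/- Let g be the Stieltjes transform of a compactly supported probability measure ν on ℝ, and let θ ∈ ℝ \ supp(ν) satisfy ∫ (θ−x)^{-2} dν(x) < 1/σ². Define φ(z) = z + σ² g(z) and ρ = φ(θ). Then the residue at z = ρ of the function z ↦ 1/(z − σ² g_λ(z) − θ)², where g_λ is a function holomorphic near ρ satisfying g_λ(φ(w)) = g(w) for w near θ (i.e. the inverse relation ω(z) = z − σ² g_λ(z) satisfies φ(ω(z)) = z), equals φ''(θ) = σ² g''(θ). -/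
open MeasureTheory Metric Filter Set Complex FormalMultilinearSeries

private lemma analyticAt_deriv' {f : ℂ → ℂ} {x : ℂ} (h : AnalyticAt ℂ f x) :
    AnalyticAt ℂ (deriv f) x := by
  obtain ⟨s, hs, hsa⟩ := h.eventually_analyticAt.exists_mem
  have : AnalyticOnNhd ℂ f s := fun z hz => hsa z hz
  exact this.deriv x (mem_of_mem_nhds hs)

private lemma residue_double_pole {h : ℂ → ℂ} {ρ : ℂ} (hh : AnalyticAt ℂ h ρ)
    (h0 : h ρ = 0) (h1 : deriv h ρ ≠ 0) :
    ∀ᶠ ε in nhdsWithin (0 : ℝ) (Set.Ioi 0),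
      (∮ z in C(ρ, ε), ((h z) ^ 2)⁻¹) =
        2 * Real.pi * Complex.I * (-iteratedDeriv 2 h ρ / (deriv h ρ) ^ 3) := by
  obtain ⟨p, hp⟩ := hh
  set k : ℂ → ℂ := dslope h ρ with hk_def
  have hk : HasFPowerSeriesAt k p.fslope ρ := hp.has_fpower_series_dslope_fslope
  have hkρ : k ρ = deriv h ρ := dslope_same h ρ
  have hkder : deriv k ρ = p.coeff 2 := by
    rw [hk.deriv]; exact p.coeff_fslope (n := 1) ▸ rfl
  have h2 : iteratedDeriv 2 h ρ = 2 * p.coeff 2 := by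
    obtain ⟨r, hpr⟩ := hp
    have := hpr.factorial_smul (1 : ℂ) 2
    simp only [Nat.factorial_two, nsmul_eq_mul, Nat.cast_ofNat] at this
    rw [iteratedDeriv, ← this]
    rfl
  have hka : AnalyticAt ℂ k ρ := ⟨p.fslope, hk⟩
  have hkne : ∀ᶠ z in nhds ρ, DifferentiableAt ℂ k z ∧ k z ≠ 0 := by
    filter_upwards [hka.eventually_analyticAt,
      hka.continuousAt.eventually_ne (hkρ ▸ h1)] with z hz hz' using ⟨hz.differentiableAt, hz'⟩
  obtain ⟨U, hUsub, hUo, hUρ⟩ := _root_.mem_nhds_iff.mp hkne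
  have hUn : ∀ z ∈ U, DifferentiableAt ℂ k z ∧ k z ≠ 0 := fun z hz => hUsub hz
  obtain ⟨r, hr0, hrU⟩ := (Metric.nhds_basis_closedBall.mem_iff).mp (hUo.mem_nhds hUρ)
  set f : ℂ → ℂ := fun z => ((k z) ^ 2)⁻¹ with hf_def
  have hfd : DifferentiableOn ℂ f U := by
    intro z hz
    exact (((hUn z hz).1.pow 2).inv (pow_ne_zero 2 (hUn z hz).2)).differentiableWithinAt
  have hkd : HasDerivAt k (p.coeff 2) ρ := hkder ▸ (hUn ρ hUρ).1.hasDerivAt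
  have hfρ : HasDerivAt f (-(2 * k ρ ^ 1 * p.coeff 2) / ((k ρ ^ 2) ^ 2)) ρ :=
    (hkd.pow 2).inv (pow_ne_zero 2 (hkρ ▸ h1))
  have hderf : deriv f ρ = -iteratedDeriv 2 h ρ / (deriv h ρ) ^ 3 := by
    rw [hfρ.deriv, h2, ← hkρ]
    have : k ρ ≠ 0 := hkρ ▸ h1
    field_simp
  filter_upwards [Ioc_mem_nhdsGT_of_mem (Set.mem_Ico.mpr ⟨le_refl (0:ℝ), hr0⟩)] with ε hε
  obtain ⟨hε0, hεr⟩ := hε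
  have hball : closedBall ρ ε ⊆ U := (closedBall_subset_closedBall hεr).trans hrU
  have cauchy := two_pi_I_inv_smul_circleIntegral_sub_sq_inv_smul_of_differentiable
    hUo hball hfd (mem_ball_self hε0)
  have hcongr : (∮ z in C(ρ, ε), ((h z) ^ 2)⁻¹) =
      ∮ z in C(ρ, ε), ((z - ρ) ^ 2)⁻¹ • f z := by
    refine circleIntegral.integral_congr hε0.le fun z hz => ?_
    have hzρ : z ≠ ρ := by
      intro hzz; rw [hzz] at hz; simp [abs_of_pos hε0] at hz; exact hε0.ne' hz.symm
    have hzh : h z = (z - ρ) * k z := by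
      have := sub_smul_dslope h ρ z
      rw [h0, sub_zero] at this
      rw [← this]; simp [smul_eq_mul, hk_def]
    rw [hzh, smul_eq_mul, mul_pow, mul_inv, hf_def]
  rw [hcongr, ← hderf, ← cauchy]
  have hπ : (2 * ↑Real.pi * Complex.I : ℂ) ≠ 0 := by
    simp [Real.pi_ne_zero, Complex.I_ne_zero]
  rw [smul_eq_mul, ← mul_assoc, mul_inv_cancel₀ hπ, one_mul]

private lemma stieltjes_hasDerivAt (ν : Measure ℝ) [IsProbabilityMeasure ν]
    (K : Set ℝ) (hKν : ν Kᶜ = 0) {z : ℂ} {δ : ℝ} (hδ : 0 < δ)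
    (hd : ∀ x ∈ K, δ ≤ dist z (x : ℂ)) :
    HasDerivAt (fun z : ℂ => ∫ x : ℝ, (z - (x : ℂ))⁻¹ ∂ν)
      (∫ x : ℝ, -(((z - (x : ℂ)) ^ 2)⁻¹) ∂ν) z := by
  have haeK : ∀ᵐ x ∂ν, x ∈ K := by
    rw [ae_iff]
    simpa [Set.compl_def] using hKν
  have hmeas : ∀ w : ℂ, AEStronglyMeasurable (fun x : ℝ => (w - (x : ℂ))⁻¹) ν := fun w =>
    ((measurable_const.sub Complex.measurable_ofReal).inv).aestronglyMeasurable
  have hmeas' : AEStronglyMeasurable (fun x : ℝ => -(((z - (x : ℂ)) ^ 2)⁻¹)) ν :=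
    ((((measurable_const.sub Complex.measurable_ofReal).pow_const 2).inv).neg).aestronglyMeasurable
  have key := hasDerivAt_integral_of_dominated_loc_of_deriv_le (μ := ν)
    (F := fun (w : ℂ) (x : ℝ) => (w - (x : ℂ))⁻¹)
    (F' := fun (w : ℂ) (x : ℝ) => -(((w - (x : ℂ)) ^ 2)⁻¹))
    (x₀ := z) (bound := fun _ => ((δ / 2)⁻¹) ^ 2)
    (ball_mem_nhds z (half_pos hδ))
    (Filter.Eventually.of_forall hmeas)
    ?_ hmeas' ?_ (integrable_const _) ?_
  · exact key.2
  · refine (integrable_const (δ⁻¹)).mono' (hmeas z) ?_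
    filter_upwards [haeK] with x hx
    rw [norm_inv]
    apply inv_anti₀ hδ
    simpa [dist_eq_norm] using hd x hx
  · filter_upwards [haeK] with x hx w hw
    have h1 : δ / 2 ≤ dist w (x : ℂ) := by
      have h3 := hd x hx
      have h2 : dist z w < δ / 2 := by rw [dist_comm]; exact mem_ball.mp hw
      linarith [dist_triangle z w (x : ℂ)]
    rw [norm_neg, norm_inv, norm_pow, ← inv_pow]
    have h5 : ‖w - (x : ℂ)‖⁻¹ ≤ (δ / 2)⁻¹ :=
      inv_anti₀ (half_pos hδ) (by rw [dist_eq_norm] at h1; exact h1)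
    exact pow_le_pow_left₀ (by positivity) h5 2
  · filter_upwards [haeK] with x hx w hw
    have h1 : δ / 2 ≤ dist w (x : ℂ) := by
      have h3 := hd x hx
      have h2 : dist z w < δ / 2 := by rw [dist_comm]; exact mem_ball.mp hw
      linarith [dist_triangle z w (x : ℂ)]
    have hwx : w - (x : ℂ) ≠ 0 := by
      rw [sub_ne_zero]
      intro hh
      rw [hh, dist_self] at h1
      linarith
    have := ((hasDerivAt_id w).sub_const (x : ℂ)).inv hwx
    simpa [neg_div, one_div, Pi.inv_def] using this

/-- Let `g` be the Stieltjes transform of a compactly supported probability measure `ν`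
on ℝ, and `θ ∈ ℝ \ supp ν` with `∫ (θ−x)⁻² dν < 1/σ²`. Set `φ(z) = z + σ² g(z)` and
`ρ = φ(θ)`. If `g_λ` is holomorphic near `ρ` and satisfies `g_λ(φ(w)) = g(w)` for `w`
near `θ`, then the residue of `z ↦ 1/(z − σ² g_λ(z) − θ)²` at `ρ` equals
`φ''(θ) = σ² g''(θ)` (the residue being characterized by small circle integrals). -/
theorem residue_outlier_function
    (ν : Measure ℝ) [IsProbabilityMeasure ν]
    (K : Set ℝ) (hKc : IsCompact K) (hKν : ν Kᶜ = 0)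
    (σ : ℝ) (hσ : 0 < σ)
    (θ : ℝ) (hθ : ∃ d > 0, ∀ x ∈ K, d ≤ |θ - x|)
    (hout : ∫ x, ((θ - x)⁻¹) ^ 2 ∂ν < 1 / σ ^ 2)
    (g : ℂ → ℂ) (hg : g = fun z => ∫ x : ℝ, (z - (x : ℂ))⁻¹ ∂ν)
    (φ : ℂ → ℂ) (hφ : φ = fun z => z + (σ : ℂ) ^ 2 * g z)
    (ρ : ℂ) (hρ : ρ = φ (θ : ℂ))
    (gl : ℂ → ℂ) (hgl : ∃ V ∈ nhds ρ, DifferentiableOn ℂ gl V)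
    (hinv : ∀ᶠ w in nhds (θ : ℂ), gl (φ w) = g w) :
    ∀ᶠ ε in nhdsWithin (0 : ℝ) (Set.Ioi 0),
      (∮ z in C(ρ, ε), ((z - (σ : ℂ) ^ 2 * gl z - (θ : ℂ)) ^ 2)⁻¹) =
        2 * Real.pi * Complex.I * ((σ : ℂ) ^ 2 * iteratedDeriv 2 g (θ : ℂ)) := by
  -- K is nonempty
  have hKne : K.Nonempty := by
    apply nonempty_of_measure_ne_zero (μ := ν)
    intro h0
    have := measure_add_measure_compl (μ := ν) hKc.isClosed.measurableSet
    rw [h0, hKν, measure_univ] at this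
    simp at this
  obtain ⟨d, hd0, hdK⟩ := hθ
  set S : Set ℂ := Complex.ofReal '' K with hS_def
  have hSc : IsClosed S := (hKc.image Complex.continuous_ofReal).isClosed
  have hSne : S.Nonempty := hKne.image _
  have hθS : (θ : ℂ) ∉ S := by
    rintro ⟨x, hxK, hx⟩
    have hxθ : x = θ := by exact_mod_cast hx
    have := hdK x hxK
    rw [hxθ] at this
    simp at this
    linarith
  -- g has a derivative everywhere off S
  have hgd : ∀ z : ℂ, z ∉ S → HasDerivAt g (∫ x : ℝ, -(((z - (x : ℂ)) ^ 2)⁻¹) ∂ν) z := by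
    intro z hz
    rw [hg]
    have hδ : 0 < infDist z S := (hSc.notMem_iff_infDist_pos hSne).mp hz
    exact stieltjes_hasDerivAt ν K hKν hδ fun x hx => infDist_le_dist_of_mem ⟨x, hx, rfl⟩
  have hUo : IsOpen Sᶜ := hSc.isOpen_compl
  have hSnhds : Sᶜ ∈ nhds (θ : ℂ) := hUo.mem_nhds hθS
  have hgdiff : DifferentiableOn ℂ g Sᶜ := fun z hz =>
    ((hgd z hz).differentiableAt).differentiableWithinAt
  have hganθ : AnalyticAt ℂ g (θ : ℂ) := hgdiff.analyticAt hSnhds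
  have hφan : AnalyticAt ℂ φ (θ : ℂ) := by
    rw [hφ]; exact (analyticAt_id.add (analyticAt_const.mul hganθ))
  -- φ' off S
  have hφderiv : ∀ z ∈ Sᶜ, HasDerivAt φ (1 + (σ : ℂ) ^ 2 * deriv g z) z := by
    intro z hz
    rw [hφ]
    have := ((hgd z hz).const_mul ((σ : ℂ) ^ 2)).const_add z
    rw [(hgd z hz).deriv]
    exact (hasDerivAt_id z).add ((hgd z hz).const_mul ((σ : ℂ) ^ 2))
  set c1 : ℂ := deriv φ (θ : ℂ) with hc1_def
  -- the real value of g'(θ)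
  set t : ℝ := ∫ x, ((θ - x)⁻¹) ^ 2 ∂ν with ht_def
  have ht0 : 0 ≤ t := integral_nonneg fun x => sq_nonneg _
  have htσ : σ ^ 2 * t < 1 := by
    have hσ2 : (0:ℝ) < σ ^ 2 := by positivity
    rw [lt_div_iff₀ hσ2] at hout
    nlinarith [hout]
  have hcast : deriv g (θ : ℂ) = ((-t : ℝ) : ℂ) := by
    rw [(hgd _ hθS).deriv]
    have heq : ∀ x : ℝ, -((((θ : ℂ) - (x : ℂ)) ^ 2)⁻¹) = ((-(((θ - x)⁻¹) ^ 2) : ℝ) : ℂ) := by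
      intro x
      push_cast
      rw [inv_pow]
    simp_rw [heq]
    have hio : ∫ x : ℝ, ((-(((θ - x)⁻¹) ^ 2) : ℝ) : ℂ) ∂ν
        = ((∫ x : ℝ, -(((θ - x)⁻¹) ^ 2) ∂ν : ℝ) : ℂ) := integral_ofReal
    rw [hio, integral_neg]
  have hc1 : c1 = ((1 - σ ^ 2 * t : ℝ) : ℂ) := by
    rw [hc1_def, (hφderiv _ hθS).deriv, hcast]
    push_cast
    ring
  have hc1ne : c1 ≠ 0 := by
    rw [hc1]
    exact_mod_cast (by linarith : (0:ℝ) < 1 - σ ^ 2 * t).ne'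
  -- the function h
  set h : ℂ → ℂ := fun z => z - (σ : ℂ) ^ 2 * gl z - (θ : ℂ) with hh_def
  obtain ⟨V, hV, hVd⟩ := hgl
  have hgl_an : AnalyticAt ℂ gl ρ := by
    obtain ⟨W, hWV, hWo, hWρ⟩ := _root_.mem_nhds_iff.mp hV
    exact (hVd.mono hWV).analyticAt (hWo.mem_nhds hWρ)
  have hhan : AnalyticAt ℂ h ρ :=
    (analyticAt_id.sub (analyticAt_const.mul hgl_an)).sub analyticAt_const
  have hglρ : gl ρ = g (θ : ℂ) := by rw [hρ]; exact hinv.self_of_nhds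
  have hh0 : h ρ = 0 := by
    rw [hh_def]
    simp only []
    rw [hglρ, hρ, hφ]
    ring
  -- the eventual identity h ∘ φ = id - θ
  have hHeq : (fun w => h (φ w)) =ᶠ[nhds (θ : ℂ)] fun w => w - (θ : ℂ) := by
    filter_upwards [hinv] with w hw
    rw [hh_def]
    simp only []
    rw [hw, hφ]
    ring
  -- chain rule eventually
  have hφct : ContinuousAt φ (θ : ℂ) := hφan.continuousAt
  have hρφ : φ (θ : ℂ) = ρ := hρ.symm
  have hhev : ∀ᶠ w in nhds (θ : ℂ), AnalyticAt ℂ h (φ w) := by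
    apply hφct.tendsto.eventually
    rw [hρφ]
    exact hhan.eventually_analyticAt
  have hφev : ∀ᶠ w in nhds (θ : ℂ), DifferentiableAt ℂ φ w := by
    filter_upwards [hSnhds] with w hw using (hφderiv w hw).differentiableAt
  have hev : ∀ᶠ w in nhds (θ : ℂ),
      deriv (fun u => h (φ u)) w = deriv h (φ w) * deriv φ w := by
    filter_upwards [hhev, hφev] with w hw1 hw2
    exact deriv_comp w hw1.differentiableAt hw2
  -- first derivative relation
  have hone : deriv h ρ * c1 = 1 := by
    have e1 := hHeq.deriv_eq
    rw [hev.self_of_nhds, hρφ] at e1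
    rw [e1]
    simp
  have hane : deriv h ρ ≠ 0 := by
    intro h0
    rw [h0, zero_mul] at hone
    exact zero_ne_one hone
  -- second derivative relation
  have hh2an : AnalyticAt ℂ (deriv h) ρ := analyticAt_deriv' hhan
  have hφ2an : AnalyticAt ℂ (deriv φ) (θ : ℂ) := analyticAt_deriv' hφan
  have hcomp : HasDerivAt (fun w => deriv h (φ w)) (deriv (deriv h) ρ * c1) (θ : ℂ) := by
    have hd1 : HasDerivAt (deriv h) (deriv (deriv h) ρ) (φ (θ : ℂ)) := by
      rw [hρφ]; exact hh2an.differentiableAt.hasDerivAt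
    exact hd1.comp (θ : ℂ) (hφan.differentiableAt.hasDerivAt)
  have hprod : HasDerivAt (fun w => deriv h (φ w) * deriv φ w)
      (deriv (deriv h) ρ * c1 * c1 + deriv h ρ * deriv (deriv φ) (θ : ℂ)) (θ : ℂ) := by
    have := hcomp.mul (hφ2an.differentiableAt.hasDerivAt)
    rwa [hρφ] at this
  have hzero : deriv (deriv h) ρ * c1 * c1 + deriv h ρ * deriv (deriv φ) (θ : ℂ) = 0 := by
    have e3 : (fun w => deriv h (φ w) * deriv φ w) =ᶠ[nhds (θ : ℂ)] fun _ => (1 : ℂ) := by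
      filter_upwards [hev, hHeq.deriv] with w h1 h2
      rw [← h1, h2]
      simp
    rw [← hprod.deriv, e3.deriv_eq, deriv_const]
  -- second derivative of φ
  have hc2 : deriv (deriv φ) (θ : ℂ) = (σ : ℂ) ^ 2 * iteratedDeriv 2 g (θ : ℂ) := by
    have hev2 : deriv φ =ᶠ[nhds (θ : ℂ)] fun w => 1 + (σ : ℂ) ^ 2 * deriv g w := by
      filter_upwards [hSnhds] with z hz using (hφderiv z hz).deriv
    rw [hev2.deriv_eq]
    have hg2 : AnalyticAt ℂ (deriv g) (θ : ℂ) := analyticAt_deriv' hganθ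
    rw [iteratedDeriv_succ, iteratedDeriv_one]
    exact (((hg2.differentiableAt.hasDerivAt).const_mul ((σ : ℂ) ^ 2)).const_add 1).deriv
  -- conclude via the residue lemma
  have hres := residue_double_pole hhan hh0 hane
  have hval : -iteratedDeriv 2 h ρ / (deriv h ρ) ^ 3 = (σ : ℂ) ^ 2 * iteratedDeriv 2 g (θ : ℂ) := by
    rw [← hc2]
    have hit : iteratedDeriv 2 h ρ = deriv (deriv h) ρ := by
      rw [iteratedDeriv_succ, iteratedDeriv_one]
    rw [hit]
    set a : ℂ := deriv h ρ
    set D : ℂ := deriv (deriv h) ρ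
    set c2 : ℂ := deriv (deriv φ) (θ : ℂ)
    field_simp
    linear_combination (-(a ^ 2)) * hzero + D * (c1 * a + 1) * hone
  filter_upwards [hres] with ε hε
  rw [← hval]
  exact hε
end

section
/- Let μ be a probability measure on ℝ^M satisfying the Poincaré inequality with constant C, and let F: ℝ^M → ℝ be Lipschitz with constant |F|_Lip. Then there exist universal constants K₁, K₂ > 0 such that for all ε > 0, μ(|F − E_μ F| > ε) ≤ K₁ exp(−ε / (K₂ √C |F|_Lip)). -/
open MeasureTheory
open Metric Filter Set
open scoped Convolution Topology

/-- A probability measure `μ` on `ℝ^M` satisfies the Poincaré inequality with constant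
`C`: for any differentiable `f` with `f` and its gradient in `L²(μ)`,
`Var(f) ≤ C ∫ ‖grad f‖² dμ`. -/
def PoincareIneqPi (M : ℕ) (μ : Measure (Fin M → ℝ)) (C : ℝ) : Prop :=
  ∀ f : (Fin M → ℝ) → ℝ, Differentiable ℝ f →
    MemLp f 2 μ →
    MemLp (fun x => Real.sqrt (∑ i, ‖fderiv ℝ f x (Pi.single i 1)‖ ^ 2)) 2 μ →
    ∫ x, ‖f x - ∫ y, f y ∂μ‖ ^ 2 ∂μ ≤ C * ∫ x, (∑ i, ‖fderiv ℝ f x (Pi.single i 1)‖ ^ 2) ∂μ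

set_option maxHeartbeats 2000000 in
lemma gm_step (M : ℕ) (μ : Measure (Fin M → ℝ)) [IsProbabilityMeasure μ]
    (C : ℝ) (hC : 0 < C) (hPI : PoincareIneqPi M μ C)
    (G : (Fin M → ℝ) → ℝ) (L : ℝ) (hL : 0 < L)
    (hG : ∀ x y, |G x - G y| ≤ L * dist x y)
    (h : ℝ) (hpos : 0 < h) (hsq : 16 * C * ((M : ℝ) + 1) * L ^ 2 ≤ h ^ 2) (a : ℝ) :
    (μ {x | a + h < G x}).toReal ≤
      (μ {x | a < G x}).toReal * ((μ {x | a < G x}).toReal + 1 / 4) := by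
  -- Lipschitz facts about G
  have hGL : LipschitzWith (Real.toNNReal L) G := by
    refine LipschitzWith.of_dist_le_mul fun x y => ?_
    rw [Real.dist_eq, Real.coe_toNNReal _ hL.le]; exact hG x y
  have hGc : Continuous G := hGL.continuous
  -- the cutoff function ψ
  set c0 : ℝ := a + h / 4 with hc0
  set ψ : ℝ → ℝ := fun t => min 1 (max ((t - c0) * (2 / h)) 0) with hψdef
  have hψ0 : ∀ t ≤ a + h / 4, ψ t = 0 := by
    intro t ht
    have h1 : (t - c0) * (2 / h) ≤ 0 := by
      apply mul_nonpos_of_nonpos_of_nonneg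
      · simp only [hc0]; linarith
      · positivity
    simp only [hψdef]
    rw [max_eq_right h1, min_eq_right zero_le_one]
  have hψ1 : ∀ t, a + 3 * h / 4 ≤ t → ψ t = 1 := by
    intro t ht
    have h1 : (1 : ℝ) ≤ (t - c0) * (2 / h) := by
      rw [← mul_le_mul_iff_left₀ hpos]
      have : (t - c0) * (2 / h) * h = (t - c0) * 2 := by field_simp
      rw [this, one_mul]; simp only [hc0]; linarith
    simp only [hψdef]
    rw [max_eq_left (le_trans zero_le_one h1), min_eq_left h1]
  have hψnonneg : ∀ t, 0 ≤ ψ t := fun t => le_min zero_le_one (le_max_right _ _)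
  have hψle1 : ∀ t, ψ t ≤ 1 := fun t => min_le_left _ _
  have hψlip : ∀ s t, |ψ s - ψ t| ≤ (2 / h) * |s - t| := by
    intro s t
    calc |ψ s - ψ t| ≤ max |(1 : ℝ) - 1| |max ((s - c0) * (2/h)) 0 - max ((t - c0) * (2/h)) 0| :=
          abs_min_sub_min_le_max _ _ _ _
      _ ≤ |(s - c0) * (2/h) - (t - c0) * (2/h)| := by
          rw [sub_self, abs_zero]
          exact max_le (abs_nonneg _) (abs_max_sub_max_le_abs _ _ _)
      _ = (2 / h) * |s - t| := by
          rw [← sub_mul, abs_mul, abs_of_nonneg (by positivity : (0:ℝ) ≤ 2 / h)]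
          ring_nf
  -- the function g and its mollification f
  set g : (Fin M → ℝ) → ℝ := fun x => ψ (G x) with hgdef
  have hgc : Continuous g := by
    apply Continuous.min continuous_const
    exact Continuous.max (((hGc.sub continuous_const).mul continuous_const)) continuous_const
  have hg01 : ∀ x, 0 ≤ g x ∧ g x ≤ 1 := fun x => ⟨hψnonneg _, hψle1 _⟩
  have hglip : ∀ x y, |g x - g y| ≤ (2 * L / h) * dist x y := by
    intro x y
    calc |g x - g y| ≤ (2 / h) * |G x - G y| := hψlip _ _
      _ ≤ (2 / h) * (L * dist x y) := by
          apply mul_le_mul_of_nonneg_left (hG x y) (by positivity)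
      _ = (2 * L / h) * dist x y := by ring
  set δ : ℝ := h / (8 * L) with hδdef
  have hδ : 0 < δ := by positivity
  set φb : ContDiffBump (0 : Fin M → ℝ) := ⟨δ/2, δ, by positivity, by linarith⟩ with hφb
  set f : (Fin M → ℝ) → ℝ := φb.normed volume ⋆[ContinuousLinearMap.lsmul ℝ ℝ, volume] g
    with hfdef
  have hf1 : ContDiff ℝ 1 f :=
    HasCompactSupport.contDiff_convolution_left (n := 1) _ φb.hasCompactSupport_normed
      φb.contDiff_normed hgc.locallyIntegrable
  have hrOut : φb.rOut = δ := rfl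
  have hLδ : L * δ = h / 8 := by rw [hδdef]; field_simp
  -- values of f where g is locally constant
  have hf_zero : ∀ x, G x ≤ a + h / 8 → f x = 0 := by
    intro x hx
    have hx4 : g x = 0 := hψ0 _ (by linarith)
    have : ∀ y ∈ ball x φb.rOut, g y = g x := by
      intro y hy
      rw [hrOut, mem_ball] at hy
      have : |G y - G x| ≤ L * dist y x := hG y x
      have hGy : G y ≤ a + h / 4 := by
        have := mul_lt_mul_of_pos_left hy hL
        rw [hLδ] at this
        have h2 : G y - G x ≤ |G y - G x| := le_abs_self _
        nlinarith [hG y x]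
      rw [hx4, hgdef]; exact hψ0 _ hGy
    rw [hfdef, ContDiffBump.normed_convolution_eq_right this, hx4]
  have hf_one : ∀ x, a + h ≤ G x → f x = 1 := by
    intro x hx
    have hx4 : g x = 1 := hψ1 _ (by linarith)
    have : ∀ y ∈ ball x φb.rOut, g y = g x := by
      intro y hy
      rw [hrOut, mem_ball] at hy
      have habs : |G y - G x| ≤ L * dist y x := hG y x
      have hGy : a + 3 * h / 4 ≤ G y := by
        have := mul_lt_mul_of_pos_left hy hL
        rw [hLδ] at this
        have h2 : -(G y - G x) ≤ |G y - G x| := neg_le_abs _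
        nlinarith
      rw [hx4, hgdef]; exact hψ1 _ hGy
    rw [hfdef, ContDiffBump.normed_convolution_eq_right this, hx4]
  -- integral representation and basic bounds
  have hint : ∀ x : Fin M → ℝ,
      Integrable (fun t => φb.normed volume t • g (x - t)) volume := by
    intro x
    apply Continuous.integrable_of_hasCompactSupport
    · exact φb.continuous_normed.smul (hgc.comp (continuous_const.sub continuous_id))
    · exact φb.hasCompactSupport_normed.smul_right
  have hf_mem : ∀ x : Fin M → ℝ, f x = ∫ t, φb.normed volume t • g (x - t) := by
    intro x; rw [hfdef]; simp [MeasureTheory.convolution_def]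
  have hf_nonneg : ∀ x, 0 ≤ f x := by
    intro x
    rw [hf_mem]
    exact integral_nonneg fun t => smul_nonneg (φb.nonneg_normed t) (hg01 _).1
  have hf_le_one : ∀ x, f x ≤ 1 := by
    intro x
    rw [hf_mem]
    calc (∫ t, φb.normed volume t • g (x - t)) ≤ ∫ t, φb.normed volume t := by
          apply integral_mono (hint x) φb.integrable_normed
          intro t
          simpa [smul_eq_mul] using
            mul_le_of_le_one_right (φb.nonneg_normed t) (hg01 (x - t)).2
      _ = 1 := φb.integral_normed
  -- Lipschitz bound for f and its derivative
  have hKnn : (0:ℝ) ≤ 2 * L / h := by positivity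
  have hf_lip : LipschitzWith (Real.toNNReal (2 * L / h)) f := by
    refine LipschitzWith.of_dist_le_mul fun x y => ?_
    rw [Real.dist_eq, Real.coe_toNNReal _ hKnn, hf_mem, hf_mem,
      ← integral_sub (hint x) (hint y)]
    calc |∫ t, φb.normed volume t • g (x - t) - φb.normed volume t • g (y - t)|
        ≤ ∫ t, |φb.normed volume t • g (x - t) - φb.normed volume t • g (y - t)| := by
          simpa [Real.norm_eq_abs] using
            norm_integral_le_integral_norm
              (fun t => φb.normed volume t • g (x - t) - φb.normed volume t • g (y - t))
      _ ≤ ∫ t, φb.normed volume t * ((2 * L / h) * dist x y) := by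
          apply integral_mono ((hint x).sub (hint y)).abs
            (φb.integrable_normed.mul_const _)
          intro t
          simp only [Pi.sub_apply]
          rw [smul_eq_mul, smul_eq_mul, ← mul_sub, abs_mul,
            abs_of_nonneg (φb.nonneg_normed t)]
          apply mul_le_mul_of_nonneg_left _ (φb.nonneg_normed t)
          calc |g (x - t) - g (y - t)| ≤ (2 * L / h) * dist (x - t) (y - t) := hglip _ _
            _ = (2 * L / h) * dist x y := by rw [dist_sub_right]
      _ = (2 * L / h) * dist x y := by
          rw [integral_mul_const, φb.integral_normed, one_mul]
  have hd_norm : ∀ x, ‖fderiv ℝ f x‖ ≤ 2 * L / h := by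
    intro x
    have := norm_fderiv_le_of_lipschitz (x₀ := x) ℝ hf_lip
    rwa [Real.coe_toNNReal _ hKnn] at this
  have hd_zero : ∀ x, G x < a + h / 8 → fderiv ℝ f x = 0 := by
    intro x hx
    have hU : IsOpen {y : Fin M → ℝ | G y < a + h / 8} := isOpen_lt hGc continuous_const
    have hev : f =ᶠ[nhds x] fun _ => (0:ℝ) := by
      filter_upwards [hU.mem_nhds hx] with y hy
      exact hf_zero y hy.le
    rw [hev.fderiv_eq, fderiv_const_apply]
  -- sets and measures
  set S : Set (Fin M → ℝ) := {x | a < G x} with hS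
  set T : Set (Fin M → ℝ) := {x | a + h < G x} with hT
  have mS : MeasurableSet S := (isOpen_lt continuous_const hGc).measurableSet
  have mT : MeasurableSet T := (isOpen_lt continuous_const hGc).measurableSet
  set p : ℝ := (μ S).toReal with hp
  set q : ℝ := (μ T).toReal with hq
  set B : ℝ := 2 * L / h with hB
  have hd_norm' : ∀ x, ‖fderiv ℝ f x‖ ≤ B := hd_norm
  -- pointwise derivative-sum bounds
  have hsum_le : ∀ x, (∑ i, ‖fderiv ℝ f x (Pi.single i 1)‖ ^ 2) ≤ (M : ℝ) * B ^ 2 := by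
    intro x
    calc (∑ i, ‖fderiv ℝ f x (Pi.single i 1)‖ ^ 2) ≤ ∑ _i : Fin M, B ^ 2 := by
          apply Finset.sum_le_sum
          intro i _
          have h1 : ‖fderiv ℝ f x (Pi.single i 1)‖ ≤ ‖fderiv ℝ f x‖ * ‖(Pi.single i 1 : Fin M → ℝ)‖ :=
            (fderiv ℝ f x).le_opNorm _
          have h2 : ‖(Pi.single i 1 : Fin M → ℝ)‖ = 1 := by rw [Pi.norm_single]; norm_num
          have h3 : ‖fderiv ℝ f x (Pi.single i 1)‖ ≤ B := by
            rw [h2, mul_one] at h1; exact h1.trans (hd_norm' x)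
          exact pow_le_pow_left₀ (norm_nonneg _) h3 2
      _ = (M : ℝ) * B ^ 2 := by
          rw [Finset.sum_const, Finset.card_univ, Fintype.card_fin, nsmul_eq_mul]
  have hsum_ind : ∀ x, (∑ i, ‖fderiv ℝ f x (Pi.single i 1)‖ ^ 2)
      ≤ S.indicator (fun _ => (M : ℝ) * B ^ 2) x := by
    intro x
    by_cases hx : x ∈ S
    · rw [Set.indicator_of_mem hx]; exact hsum_le x
    · rw [Set.indicator_of_notMem hx]
      have hGx : G x ≤ a := not_lt.1 hx
      have h0 : fderiv ℝ f x = 0 := hd_zero x (by linarith)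
      simp [h0]
  -- continuity of the derivative sum
  have hdc : Continuous fun x => (∑ i, ‖fderiv ℝ f x (Pi.single i 1)‖ ^ 2) := by
    apply continuous_finset_sum
    intro i _
    have hco : Continuous fun x => fderiv ℝ f x (Pi.single i 1) :=
      (ContinuousLinearMap.apply ℝ ℝ ((Pi.single i 1 : Fin M → ℝ))).continuous.comp
        (hf1.continuous_fderiv one_ne_zero)
    exact (hco.norm).pow 2
  -- MemLp hypotheses
  have hfc : Continuous f := hf1.continuous
  have mem1 : MemLp f 2 μ := by
    apply MemLp.of_bound hfc.aestronglyMeasurable 1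
    apply ae_of_all
    intro x
    rw [Real.norm_eq_abs, abs_of_nonneg (hf_nonneg x)]
    exact hf_le_one x
  have mem2 : MemLp (fun x => Real.sqrt (∑ i, ‖fderiv ℝ f x (Pi.single i 1)‖ ^ 2)) 2 μ := by
    apply MemLp.of_bound (Real.continuous_sqrt.comp hdc).aestronglyMeasurable
      (Real.sqrt ((M : ℝ) * B ^ 2))
    apply ae_of_all
    intro x
    show ‖Real.sqrt (∑ i, ‖fderiv ℝ f x (Pi.single i 1)‖ ^ 2)‖ ≤ _
    rw [Real.norm_eq_abs, abs_of_nonneg (Real.sqrt_nonneg _)]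
    exact Real.sqrt_le_sqrt (hsum_le x)
  set m : ℝ := ∫ y, f y ∂μ with hm
  have hPIa := hPI f (hf1.differentiable one_ne_zero) mem1 mem2
  rw [← hm] at hPIa
  -- integrability facts
  have hif : Integrable f μ := mem1.integrable (by norm_num)
  have hif2 : Integrable (fun x => (f x) ^ 2) μ := by
    apply (integrable_const (1:ℝ)).mono' ((hfc.pow 2).aestronglyMeasurable)
    apply ae_of_all
    intro x
    rw [Real.norm_eq_abs, abs_of_nonneg (by rw [Pi.pow_apply]; positivity : (0:ℝ) ≤ (f ^ 2) x)]
    exact pow_le_one₀ (hf_nonneg x) (hf_le_one x)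
  have hiS : Integrable (fun x => (∑ i, ‖fderiv ℝ f x (Pi.single i 1)‖ ^ 2)) μ := by
    apply (integrable_const ((M:ℝ) * B ^ 2)).mono' hdc.aestronglyMeasurable
    apply ae_of_all
    intro x
    rw [Real.norm_eq_abs, abs_of_nonneg (by positivity)]
    exact hsum_le x
  -- bounds on the mean of f
  have hm0 : 0 ≤ m := integral_nonneg hf_nonneg
  have hmp : m ≤ p := by
    have h1 : ∫ x, f x ∂μ ≤ ∫ x, S.indicator (fun _ => (1:ℝ)) x ∂μ := by
      apply integral_mono hif ((integrable_const (1:ℝ)).indicator mS)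
      intro x
      by_cases hx : x ∈ S
      · rw [Set.indicator_of_mem hx]; exact hf_le_one x
      · rw [Set.indicator_of_notMem hx]
        have hGx : G x ≤ a := not_lt.1 hx
        exact le_of_eq (hf_zero x (by linarith))
    rw [integral_indicator_const _ mS, smul_eq_mul, mul_one, ← hm] at h1
    exact h1
  have hq2 : q ≤ ∫ x, (f x) ^ 2 ∂μ := by
    have h1 : ∫ x, T.indicator (fun _ => (1:ℝ)) x ∂μ ≤ ∫ x, (f x) ^ 2 ∂μ := by
      apply integral_mono ((integrable_const (1:ℝ)).indicator mT) hif2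
      intro x
      show T.indicator (fun _ => (1:ℝ)) x ≤ f x ^ 2
      by_cases hx : x ∈ T
      · rw [Set.indicator_of_mem hx, hf_one x (le_of_lt hx)]; norm_num
      · rw [Set.indicator_of_notMem hx]; positivity
    rwa [integral_indicator_const _ mT, smul_eq_mul, mul_one] at h1
  -- expansion of the variance integral
  have hexp : ∫ x, ‖f x - m‖ ^ 2 ∂μ = (∫ x, (f x) ^ 2 ∂μ) - m ^ 2 := by
    have e1 : (fun x => ‖f x - m‖ ^ 2) = fun x => (f x) ^ 2 - (2*m) * f x + m ^ 2 := by
      funext x; rw [Real.norm_eq_abs, sq_abs]; ring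
    have i2 : Integrable (fun x => 2 * m * f x) μ := hif.const_mul (2*m)
    have i1 : Integrable (fun x => f x ^ 2 - 2 * m * f x) μ := hif2.sub i2
    rw [e1, integral_add i1 (integrable_const _), integral_sub hif2 i2,
      MeasureTheory.integral_const_mul, integral_const]
    simp only [measure_univ, probReal_univ, ENNReal.toReal_one, smul_eq_mul, one_mul, mul_one]
    rw [← hm]; ring
  -- RHS bound
  have hRHS : ∫ x, (∑ i, ‖fderiv ℝ f x (Pi.single i 1)‖ ^ 2) ∂μ ≤ (M:ℝ) * B ^ 2 * p := by
    have h1 := integral_mono hiS ((integrable_const _).indicator mS) hsum_ind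
    rwa [integral_indicator_const _ mS, smul_eq_mul, mul_comm] at h1
  have hh2 : (0:ℝ) < h ^ 2 := by positivity
  have hCB : C * ((M:ℝ) * B ^ 2) ≤ 1 / 4 := by
    have e1 : C * ((M:ℝ) * B ^ 2) = (4 * C * (M:ℝ) * L ^ 2) / h ^ 2 := by
      rw [hB]; field_simp; ring
    rw [e1, div_le_iff₀ hh2]
    nlinarith [mul_pos hC (pow_pos hL 2), Nat.cast_nonneg (α := ℝ) M]
  have hp0 : (0:ℝ) ≤ p := ENNReal.toReal_nonneg
  have key : q - p ^ 2 ≤ (1/4) * p := by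
    have l1 : q - m ^ 2 ≤ ∫ x, ‖f x - m‖ ^ 2 ∂μ := by rw [hexp]; linarith
    have l2 : C * ∫ x, (∑ i, ‖fderiv ℝ f x (Pi.single i 1)‖ ^ 2) ∂μ
        ≤ C * ((M:ℝ) * B ^ 2 * p) := mul_le_mul_of_nonneg_left hRHS hC.le
    have l3 : C * ((M:ℝ) * B ^ 2 * p) ≤ (1/4) * p := by
      have := mul_le_mul_of_nonneg_right hCB hp0
      calc C * ((M:ℝ) * B ^ 2 * p) = C * ((M:ℝ) * B ^ 2) * p := by ring
        _ ≤ (1/4) * p := this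
    have hm2 : m ^ 2 ≤ p ^ 2 := pow_le_pow_left₀ hm0 hmp 2
    linarith
  calc q ≤ p ^ 2 + (1/4) * p := by linarith
    _ = p * (p + 1/4) := by ring

lemma gm_iter (M : ℕ) (μ : Measure (Fin M → ℝ)) [IsProbabilityMeasure μ]
    (C : ℝ) (hC : 0 < C) (hPI : PoincareIneqPi M μ C)
    (G : (Fin M → ℝ) → ℝ) (L : ℝ) (hL : 0 < L)
    (hG : ∀ x y, |G x - G y| ≤ L * dist x y)
    (h : ℝ) (hpos : 0 < h) (hsq : 16 * C * ((M : ℝ) + 1) * L ^ 2 ≤ h ^ 2) (a : ℝ)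
    (h0 : (μ {x | a < G x}).toReal ≤ 1 / 2) :
    ∀ k : ℕ, (μ {x | a + k * h < G x}).toReal ≤ (1 / 2) * (3 / 4) ^ k := by
  intro k
  induction k with
  | zero => simpa using h0
  | succ k ih =>
    have hstep := gm_step M μ C hC hPI G L hL hG h hpos hsq (a + k * h)
    have he : a + (k + 1 : ℕ) * h = a + k * h + h := by push_cast; ring
    rw [he]
    set pk : ℝ := (μ {x | a + k * h < G x}).toReal with hpk
    have hpk0 : 0 ≤ pk := ENNReal.toReal_nonneg
    have hpkh : pk ≤ 1 / 2 := le_trans ih (by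
      have : ((3:ℝ)/4) ^ k ≤ 1 := pow_le_one₀ (by norm_num) (by norm_num)
      nlinarith)
    calc (μ {x | a + k * h + h < G x}).toReal ≤ pk * (pk + 1 / 4) := hstep
      _ ≤ pk * (3 / 4) := by nlinarith
      _ ≤ ((1/2) * (3/4) ^ k) * (3/4) := by nlinarith
      _ = (1/2) * (3/4) ^ (k + 1) := by ring

lemma gm_tail (M : ℕ) (μ : Measure (Fin M → ℝ)) [IsProbabilityMeasure μ]
    (C : ℝ) (hC : 0 < C) (hPI : PoincareIneqPi M μ C)
    (G : (Fin M → ℝ) → ℝ) (L : ℝ) (hL : 0 < L)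
    (hG : ∀ x y, |G x - G y| ≤ L * dist x y)
    (h : ℝ) (hpos : 0 < h) (hsq : 16 * C * ((M : ℝ) + 1) * L ^ 2 ≤ h ^ 2) (a : ℝ)
    (h0 : (μ {x | a < G x}).toReal ≤ 1 / 2) :
    ∀ t : ℝ, (μ {x | a + t < G x}).toReal ≤
      2 * Real.exp (-(t * (Real.log (4 / 3) / h))) := by
  intro t
  have hlog : 0 < Real.log (4 / 3) := Real.log_pos (by norm_num)
  have hto1 : ∀ s : Set (Fin M → ℝ), (μ s).toReal ≤ 1 := by
    intro s
    have hle : μ s ≤ 1 := prob_le_one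
    have := ENNReal.toReal_mono ENNReal.one_ne_top hle
    simpa using this
  rcases le_or_gt t 0 with ht | ht
  · have : (1:ℝ) ≤ Real.exp (-(t * (Real.log (4/3) / h))) := by
      rw [← Real.exp_zero]
      apply Real.exp_le_exp.2
      have : t * (Real.log (4/3) / h) ≤ 0 :=
        mul_nonpos_of_nonpos_of_nonneg ht (by positivity)
      linarith
    calc (μ {x | a + t < G x}).toReal ≤ 1 := hto1 _
      _ ≤ 2 * Real.exp (-(t * (Real.log (4/3) / h))) := by linarith
  · set k : ℕ := ⌊t / h⌋₊ with hk
    have hkle : (k : ℝ) * h ≤ t := by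
      rw [hk]
      have := Nat.floor_le (by positivity : (0:ℝ) ≤ t / h)
      calc (⌊t / h⌋₊ : ℝ) * h ≤ (t / h) * h := by nlinarith
        _ = t := by field_simp
    have hklt : t / h < (k : ℝ) + 1 := Nat.lt_floor_add_one _
    have hsub : {x | a + t < G x} ⊆ {x | a + (k : ℝ) * h < G x} := by
      intro x hx
      simp only [Set.mem_setOf_eq] at hx ⊢
      linarith
    have hmono : (μ {x | a + t < G x}).toReal ≤ (μ {x | a + (k:ℝ) * h < G x}).toReal :=
      ENNReal.toReal_mono (measure_ne_top μ _) (measure_mono hsub)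
    have hiter := gm_iter M μ C hC hPI G L hL hG h hpos hsq a h0 k
    have hgeo : ((3:ℝ)/4) ^ k = Real.exp (-(k * Real.log (4/3))) := by
      have h34 : Real.exp (Real.log (3/4)) = 3/4 := Real.exp_log (by norm_num)
      have hlog34 : Real.log (3/4) = - Real.log (4/3) := by
        rw [show (3:ℝ)/4 = ((4:ℝ)/3)⁻¹ by norm_num, Real.log_inv]
      rw [← h34, ← Real.exp_nat_mul, hlog34, mul_neg]
    have hexple : Real.exp (-(k * Real.log (4/3))) ≤
        Real.exp (Real.log (4/3)) * Real.exp (-(t * (Real.log (4/3) / h))) := by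
      rw [← Real.exp_add]
      apply Real.exp_le_exp.2
      have h1 : t / h - 1 ≤ (k : ℝ) := by linarith
      have h2 : t * (Real.log (4/3) / h) = (t / h) * Real.log (4/3) := by ring
      nlinarith [mul_le_mul_of_nonneg_right h1 hlog.le]
    have hexplog : Real.exp (Real.log (4/3)) = 4/3 := Real.exp_log (by norm_num)
    calc (μ {x | a + t < G x}).toReal
        ≤ (1/2) * ((3:ℝ)/4) ^ k := le_trans hmono hiter
      _ ≤ (1/2) * (Real.exp (Real.log (4/3)) * Real.exp (-(t * (Real.log (4/3) / h)))) := by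
          rw [hgeo]; nlinarith [hexple]
      _ = (2/3) * Real.exp (-(t * (Real.log (4/3) / h))) := by rw [hexplog]; ring
      _ ≤ 2 * Real.exp (-(t * (Real.log (4/3) / h))) := by
          nlinarith [Real.exp_pos (-(t * (Real.log (4/3) / h)))]

lemma gm_start (M : ℕ) (μ : Measure (Fin M → ℝ)) [IsProbabilityMeasure μ]
    (G : (Fin M → ℝ) → ℝ) (hGc : Continuous G) :
    ∃ a : ℝ, (μ {x | a < G x}).toReal ≤ 1 / 2 := by
  set s : ℕ → Set (Fin M → ℝ) := fun n => {x | (n : ℝ) < G x} with hs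
  have hmeas : ∀ n, MeasurableSet (s n) := fun n =>
    (isOpen_lt continuous_const hGc).measurableSet
  have hanti : Antitone s := by
    intro n m hnm x hx
    simp only [hs, Set.mem_setOf_eq] at hx ⊢
    have : (n : ℝ) ≤ (m : ℝ) := Nat.cast_le.2 hnm
    linarith
  have hempty : ⋂ n, s n = ∅ := by
    ext x
    simp only [Set.mem_iInter, hs, Set.mem_setOf_eq, Set.mem_empty_iff_false, iff_false,
      not_forall, not_lt]
    obtain ⟨n, hn⟩ := exists_nat_ge (G x)
    exact ⟨n, hn⟩
  have htend : Filter.Tendsto (μ ∘ s) Filter.atTop (nhds 0) := by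
    have := tendsto_measure_iInter_atTop (μ := μ)
      (fun n => (hmeas n).nullMeasurableSet) hanti ⟨0, measure_ne_top μ _⟩
    rwa [hempty, measure_empty] at this
  have hev : ∀ᶠ n in Filter.atTop, (μ ∘ s) n < ENNReal.ofReal (1/2) :=
    htend.eventually_lt_const (by simp [ENNReal.ofReal_pos])
  obtain ⟨n, hn⟩ := hev.exists
  refine ⟨n, ?_⟩
  have := ENNReal.toReal_mono (by simp) hn.le
  rwa [ENNReal.toReal_ofReal (by norm_num)] at this

/-- Exponential concentration from a Poincaré inequality (Gromov–Milman / Herbst):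
if `μ` satisfies a Poincaré inequality with constant `C > 0` and `F` is Lipschitz with
constant `L > 0`, then there are constants `K₁, K₂ > 0` with
`μ(|F − E_μ F| > ε) ≤ K₁ exp(−ε / (K₂ √C L))` for every `ε > 0`. -/
theorem poincare_exponential_concentration
    (M : ℕ) (μ : Measure (Fin M → ℝ)) [IsProbabilityMeasure μ]
    (C : ℝ) (hC : 0 < C) (hPI : PoincareIneqPi M μ C)
    (F : (Fin M → ℝ) → ℝ) (L : ℝ) (hL : 0 < L)
    (hF : ∀ x y, |F x - F y| ≤ L * dist x y) :
    ∃ K₁ > (0 : ℝ), ∃ K₂ > (0 : ℝ), ∀ ε : ℝ, 0 < ε →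
      (μ {x | ε < |F x - ∫ y, F y ∂μ|}).toReal ≤
        K₁ * Real.exp (-ε / (K₂ * Real.sqrt C * L)) := by
  have hM1 : (0:ℝ) < (M:ℝ) + 1 := by positivity
  set h : ℝ := 4 * Real.sqrt (C * ((M:ℝ) + 1)) * L with hh
  have hsqrtpos : 0 < Real.sqrt (C * ((M:ℝ) + 1)) := Real.sqrt_pos.2 (mul_pos hC hM1)
  have hpos : 0 < h := by rw [hh]; positivity
  have hsq : 16 * C * ((M:ℝ) + 1) * L ^ 2 ≤ h ^ 2 := by
    rw [hh, mul_pow, mul_pow, Real.sq_sqrt (le_of_lt (mul_pos hC hM1))]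
    apply le_of_eq; ring
  have hlog : 0 < Real.log (4/3) := Real.log_pos (by norm_num)
  have hF' : ∀ x y, |(fun z => -F z) x - (fun z => -F z) y| ≤ L * dist x y := by
    intro x y
    simp only
    rw [show -F x - -F y = -(F x - F y) by ring, abs_neg]
    exact hF x y
  have hFc : Continuous F := by
    have hlip : LipschitzWith (Real.toNNReal L) F := LipschitzWith.of_dist_le_mul (fun x y => by
      rw [Real.dist_eq, Real.coe_toNNReal _ hL.le]; exact hF x y)
    exact hlip.continuous
  obtain ⟨a₀, ha₀⟩ := gm_start M μ F hFc
  obtain ⟨a₁, ha₁⟩ := gm_start M μ (fun z => -F z) hFc.neg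
  set m : ℝ := ∫ y, F y ∂μ with hm
  set c : ℝ := Real.log (4/3) / h with hc
  have hcpos : 0 < c := div_pos hlog hpos
  refine ⟨2 * Real.exp ((a₀ - m) * c) + 2 * Real.exp ((a₁ + m) * c), by positivity,
    4 * Real.sqrt ((M:ℝ) + 1) / Real.log (4/3),
    div_pos (by positivity) hlog, ?_⟩
  intro ε hε
  have hKc : -ε / (4 * Real.sqrt ((M:ℝ)+1) / Real.log (4/3) * Real.sqrt C * L) = -(ε * c) := by
    have hsC : Real.sqrt (C * ((M:ℝ)+1)) = Real.sqrt C * Real.sqrt ((M:ℝ)+1) :=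
      Real.sqrt_mul hC.le _
    have h1 : (0:ℝ) < Real.sqrt C := Real.sqrt_pos.2 hC
    have h2 : (0:ℝ) < Real.sqrt ((M:ℝ)+1) := Real.sqrt_pos.2 hM1
    rw [hc, hh, hsC]
    field_simp
    try exact Or.inl trivial
  rw [hKc]
  have hsub : {x | ε < |F x - m|} ⊆
      {x | a₀ + (m + ε - a₀) < F x} ∪ {x | a₁ + (ε - m - a₁) < -F x} := by
    intro x hx
    simp only [Set.mem_setOf_eq, Set.mem_union] at hx ⊢
    rcases lt_abs.1 hx with h1 | h1
    · left; linarith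
    · right; linarith
  have htoR : (μ {x | ε < |F x - m|}).toReal ≤
      (μ {x | a₀ + (m + ε - a₀) < F x}).toReal +
        (μ {x | a₁ + (ε - m - a₁) < -F x}).toReal := by
    calc (μ {x | ε < |F x - m|}).toReal
        ≤ (μ ({x | a₀ + (m + ε - a₀) < F x} ∪ {x | a₁ + (ε - m - a₁) < -F x})).toReal :=
          ENNReal.toReal_mono (measure_ne_top μ _) (measure_mono hsub)
      _ ≤ _ := by
          rw [← ENNReal.toReal_add (measure_ne_top μ _) (measure_ne_top μ _)]
          exact ENNReal.toReal_mono
            (ENNReal.add_ne_top.2 ⟨measure_ne_top μ _, measure_ne_top μ _⟩)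
            (measure_union_le _ _)
  have ht1 : (μ {x | a₀ + (m + ε - a₀) < F x}).toReal ≤
      2 * Real.exp (-((m + ε - a₀) * (Real.log (4/3) / h))) :=
    gm_tail M μ C hC hPI F L hL hF h hpos hsq a₀ ha₀ (m + ε - a₀)
  have ht2 : (μ {x | a₁ + (ε - m - a₁) < -F x}).toReal ≤
      2 * Real.exp (-((ε - m - a₁) * (Real.log (4/3) / h))) :=
    gm_tail M μ C hC hPI (fun z => -F z) L hL hF' h hpos hsq a₁ ha₁ (ε - m - a₁)
  have e1 : (2:ℝ) * Real.exp (-((m + ε - a₀) * (Real.log (4/3) / h)))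
      = 2 * Real.exp ((a₀ - m) * c) * Real.exp (-(ε * c)) := by
    rw [show -((m + ε - a₀) * (Real.log (4/3)/h)) = (a₀ - m) * c + -(ε * c) by rw [hc]; ring,
      Real.exp_add]
    ring
  have e2 : (2:ℝ) * Real.exp (-((ε - m - a₁) * (Real.log (4/3) / h)))
      = 2 * Real.exp ((a₁ + m) * c) * Real.exp (-(ε * c)) := by
    rw [show -((ε - m - a₁) * (Real.log (4/3)/h)) = (a₁ + m) * c + -(ε * c) by rw [hc]; ring,
      Real.exp_add]
    ring
  calc (μ {x | ε < |F x - m|}).toReal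
      ≤ (μ {x | a₀ + (m + ε - a₀) < F x}).toReal +
          (μ {x | a₁ + (ε - m - a₁) < -F x}).toReal := htoR
    _ ≤ 2 * Real.exp (-((m + ε - a₀) * (Real.log (4/3) / h)))
        + 2 * Real.exp (-((ε - m - a₁) * (Real.log (4/3) / h))) := add_le_add ht1 ht2
    _ = (2 * Real.exp ((a₀ - m) * c) + 2 * Real.exp ((a₁ + m) * c)) * Real.exp (-(ε * c)) := by
        rw [e1, e2]; ring
end
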